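/- There exists an absolute constant C > 0 such that the following holds. Let f : ℝ^d → ℝ be differentiable, convex, and L-smooth with L > 0, and suppose f attains its minimum at x* with f* = f(x*). Let T ≥ 1 and let the sequence (x_t)_{t=0,...,T} be generated by gradient descent with Polyak stepsize: x_{t+1} = x_t − η_t ∇f(x_t) with η_t = (f(x_t) − f*)/‖∇f(x_t)‖² (where ∇f(x_t) ≠ 0 for all t < T). Then with x̄ = (1/T) Σ_{t=0}^{T−1} x_t, f(x̄) − f* ≤ C · L ‖x_0 − x*‖² / T. -/

import Mathlib

open InnerProductSpace

variable {E : Type*} [NormedAddCommGroup E] [InnerProductSpace ℝ E] [CompleteSpace E]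

lemma line_hasDerivAt (f : E → ℝ) (hd : Differentiable ℝ f) (x v : E) (t : ℝ) :
    HasDerivAt (fun s : ℝ => f (x + s • v)) ⟪gradient f (x + t • v), v⟫_ℝ t := by
  have hg : HasDerivAt (fun s : ℝ => x + s • v) v t := by
    simpa using (hasDerivAt_id t).smul_const v |>.const_add x
  have hf : HasFDerivAt f ((toDual ℝ E) (gradient f (x + t • v))) (x + t • v) :=
    (hasGradientAt_iff_hasFDerivAt).mp (hd _).hasGradientAt
  have h := hf.comp_hasDerivAt t hg
  simp only [toDual_apply_apply] at h
  exact h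

lemma quad_upper (f : E → ℝ) (L : ℝ) (hL : 0 < L) (hd : Differentiable ℝ f)
    (hlip : ∀ x y : E, ‖gradient f x - gradient f y‖ ≤ L * ‖x - y‖)
    (x v : E) : f (x + v) ≤ f x + ⟪gradient f x, v⟫_ℝ + L * ‖v‖ ^ 2 := by
  set φ : ℝ → ℝ := fun s => f (x + s • v) with hφ
  have hder : ∀ t : ℝ, HasDerivAt φ ⟪gradient f (x + t • v), v⟫_ℝ t :=
    fun t => line_hasDerivAt f hd x v t
  obtain ⟨c, hc, hceq⟩ := exists_hasDerivAt_eq_slope φ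
      (fun t => ⟪gradient f (x + t • v), v⟫_ℝ) (by norm_num : (0:ℝ) < 1)
      (fun t _ => (hder t).continuousAt.continuousWithinAt)
      (fun t _ => hder t)
  have h01 : φ 1 - φ 0 = ⟪gradient f (x + c • v), v⟫_ℝ := by
    rw [hceq]; ring
  have hφ1 : φ 1 = f (x + v) := by simp [hφ]
  have hφ0 : φ 0 = f x := by simp [hφ]
  have hsplit : ⟪gradient f (x + c • v), v⟫_ℝ =
      ⟪gradient f x, v⟫_ℝ + ⟪gradient f (x + c • v) - gradient f x, v⟫_ℝ := by
    rw [inner_sub_left]; ring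
  have hbound : ⟪gradient f (x + c • v) - gradient f x, v⟫_ℝ ≤ L * ‖v‖ ^ 2 := by
    calc ⟪gradient f (x + c • v) - gradient f x, v⟫_ℝ
        ≤ ‖gradient f (x + c • v) - gradient f x‖ * ‖v‖ := real_inner_le_norm _ _
      _ ≤ (L * ‖x + c • v - x‖) * ‖v‖ := by
          gcongr; exact hlip _ _
      _ = L * (c * ‖v‖) * ‖v‖ := by
          rw [show x + c • v - x = c • v by abel, norm_smul, Real.norm_eq_abs,
            abs_of_pos hc.1]
      _ ≤ L * (1 * ‖v‖) * ‖v‖ := by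
          gcongr; exact le_of_lt hc.2
      _ = L * ‖v‖ ^ 2 := by ring
  nlinarith [h01, hφ1, hφ0, hsplit, hbound]

lemma convex_first_order (f : E → ℝ) (hd : Differentiable ℝ f)
    (hc : ConvexOn ℝ Set.univ f) (x y : E) :
    f x + ⟪gradient f x, y - x⟫_ℝ ≤ f y := by
  set φ : ℝ → ℝ := fun s => f (x + s • (y - x)) with hφ
  have hder : HasDerivAt φ ⟪gradient f x, y - x⟫_ℝ 0 := by
    simpa using line_hasDerivAt f hd x (y - x) 0
  have key : ∀ t : ℝ, t ∈ Set.Ioc (0:ℝ) 1 → (φ t - φ 0) / (t - 0) ≤ f y - f x := by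
    intro t ht
    have hconv := hc.2 (Set.mem_univ x) (Set.mem_univ y)
      (by linarith [ht.2] : (0:ℝ) ≤ 1 - t) (le_of_lt ht.1) (by ring)
    have harg : (1 - t) • x + t • y = x + t • (y - x) := by
      module
    rw [harg] at hconv
    have hφt : φ t ≤ (1 - t) * f x + t * f y := hconv
    have hφ0 : φ 0 = f x := by simp [hφ]
    rw [hφ0, sub_zero, div_le_iff₀ ht.1]
    nlinarith
  have htend : Filter.Tendsto (slope φ 0) (nhdsWithin 0 (Set.Ioi 0))
      (nhds ⟪gradient f x, y - x⟫_ℝ) :=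
    (hasDerivAt_iff_tendsto_slope.mp hder).mono_left
      (nhdsWithin_mono 0 (fun t ht => ne_of_gt ht))
  have hle : ⟪gradient f x, y - x⟫_ℝ ≤ f y - f x := by
    refine le_of_tendsto htend ?_
    filter_upwards [Ioc_mem_nhdsGT_of_mem (by norm_num : (0:ℝ) ∈ Set.Ico 0 1)] with t ht
    simpa [slope_def_field, div_eq_inv_mul] using key t ht
  linarith

lemma grad_sq_le (f : E → ℝ) (L : ℝ) (hL : 0 < L) (hd : Differentiable ℝ f)
    (hlip : ∀ x y : E, ‖gradient f x - gradient f y‖ ≤ L * ‖x - y‖)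
    (xstar : E) (hmin : ∀ y, f xstar ≤ f y) (x : E) :
    ‖gradient f x‖ ^ 2 ≤ 4 * L * (f x - f xstar) := by
  set g := gradient f x with hg
  have h := quad_upper f L hL hd hlip x (-(1 / (2 * L)) • g)
  have hmin' := hmin (x + -(1 / (2 * L)) • g)
  rw [inner_smul_right, norm_smul, real_inner_self_eq_norm_sq] at h
  have hns : ‖(-(1 / (2 * L)) : ℝ)‖ = 1 / (2 * L) := by
    rw [Real.norm_eq_abs, abs_neg, abs_of_pos (by positivity)]
  rw [hns] at h
  have hL' : L ≠ 0 := ne_of_gt hL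
  have e1 : L * (1 / (2 * L) * ‖g‖) ^ 2 = ‖g‖ ^ 2 / (4 * L) := by
    field_simp; ring
  have e2 : -(1 / (2 * L)) * ‖gradient f x‖ ^ 2 = -(‖g‖ ^ 2 / (2 * L)) := by
    rw [← hg]; field_simp
  rw [e1, e2] at h
  have h3 : ‖g‖ ^ 2 / (4 * L) ≤ f x - f xstar := by
    have : ‖g‖ ^ 2 / (2 * L) - ‖g‖ ^ 2 / (4 * L) = ‖g‖ ^ 2 / (4 * L) := by
      field_simp; ring
    linarith
  calc ‖g‖ ^ 2 = (‖g‖ ^ 2 / (4 * L)) * (4 * L) := by field_simp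
    _ ≤ (f x - f xstar) * (4 * L) := mul_le_mul_of_nonneg_right h3 (by positivity)
    _ = 4 * L * (f x - f xstar) := by ring

/-- There exists an absolute constant `C > 0` such that gradient descent
with Polyak stepsize on a convex L-smooth function satisfies
`f(x̄) − f* ≤ C·L‖x_0 − x*‖²/T`. -/
theorem polyak_stepsize_convergence_smooth :
    ∃ C > (0 : ℝ), ∀ (d : ℕ)
      (f : EuclideanSpace ℝ (Fin d) → ℝ) (L : ℝ),
      0 < L →
      Differentiable ℝ f →
      ConvexOn ℝ Set.univ f →
      (∀ x y : EuclideanSpace ℝ (Fin d),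
        ‖gradient f x - gradient f y‖ ≤ L * ‖x - y‖) →
      ∀ (xstar : EuclideanSpace ℝ (Fin d)), (∀ y, f xstar ≤ f y) →
      ∀ (T : ℕ), 1 ≤ T →
      ∀ (x : ℕ → EuclideanSpace ℝ (Fin d)),
      (∀ t < T, gradient f (x t) ≠ 0) →
      (∀ t < T, x (t + 1) = x t -
        ((f (x t) - f xstar) / ‖gradient f (x t)‖ ^ 2) • gradient f (x t)) →
      f ((T : ℝ)⁻¹ • ∑ t ∈ Finset.range T, x t) - f xstar ≤
        C * L * ‖x 0 - xstar‖ ^ 2 / T := by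
  refine ⟨4, by norm_num, ?_⟩
  intro d f L hL hd hconv hlip xstar hmin T hT x hgrad hupd
  set R : ℕ → ℝ := fun t => ‖x t - xstar‖ ^ 2 with hR
  have hstep : ∀ t < T, (f (x t) - f xstar) / (4 * L) ≤ R t - R (t + 1) := by
    intro t ht
    set g := gradient f (x t) with hg
    set gap := f (x t) - f xstar with hgap
    have hg0 : g ≠ 0 := hgrad t ht
    have hg2 : (0:ℝ) < ‖g‖ ^ 2 := pow_pos (norm_pos_iff.mpr hg0) 2
    have hgsq : ‖g‖ ^ 2 ≤ 4 * L * gap := grad_sq_le f L hL hd hlip xstar hmin (x t)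
    have hgap0 : 0 < gap := by nlinarith
    set η : ℝ := gap / ‖g‖ ^ 2 with hη
    have hfo := convex_first_order f hd hconv (x t) xstar
    have hinner : gap ≤ ⟪g, x t - xstar⟫_ℝ := by
      have : ⟪g, xstar - x t⟫_ℝ = -⟪g, x t - xstar⟫_ℝ := by
        rw [show xstar - x t = -(x t - xstar) by abel, inner_neg_right]
      rw [this] at hfo; linarith
    have hexp : R (t + 1) = R t - 2 * η * ⟪x t - xstar, g⟫_ℝ + η ^ 2 * ‖g‖ ^ 2 := by
      show ‖x (t+1) - xstar‖ ^ 2 = _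
      rw [hupd t ht,
        show x t - ((f (x t) - f xstar) / ‖gradient f (x t)‖ ^ 2) • gradient f (x t) - xstar
          = (x t - xstar) - η • g from by rw [hη, hgap, hg]; abel,
        norm_sub_sq_real, real_inner_smul_right, norm_smul, Real.norm_eq_abs,
        mul_pow, sq_abs]
      ring
    have hη2 : η ^ 2 * ‖g‖ ^ 2 = gap ^ 2 / ‖g‖ ^ 2 := by
      rw [hη]; field_simp
    have hRle : R (t + 1) ≤ R t - gap ^ 2 / ‖g‖ ^ 2 := by
      have h1 : gap ^ 2 / ‖g‖ ^ 2 ≤ η * ⟪x t - xstar, g⟫_ℝ := by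
        rw [hη, real_inner_comm, div_mul_eq_mul_div, div_le_div_iff₀ hg2 hg2]
        have := mul_le_mul_of_nonneg_right
          (mul_le_mul_of_nonneg_left hinner hgap0.le) hg2.le
        nlinarith [this]
      linarith [hexp, hη2.symm.le, hη2.le, h1]
    have hfin : gap / (4 * L) ≤ gap ^ 2 / ‖g‖ ^ 2 := by
      rw [div_le_div_iff₀ (by positivity) hg2]
      nlinarith
    linarith
  have hsumtel : ∑ t ∈ Finset.range T, (R t - R (t + 1)) = R 0 - R T :=
    Finset.sum_range_sub' R T
  have hsum : ∑ t ∈ Finset.range T, (f (x t) - f xstar) ≤ 4 * L * R 0 := by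
    have h1 : ∑ t ∈ Finset.range T, (f (x t) - f xstar) / (4 * L) ≤ R 0 - R T :=
      hsumtel ▸ Finset.sum_le_sum (fun t ht => hstep t (Finset.mem_range.mp ht))
    have hRT : 0 ≤ R T := by positivity
    have h2 : ∑ t ∈ Finset.range T, (f (x t) - f xstar) / (4 * L)
        = (∑ t ∈ Finset.range T, (f (x t) - f xstar)) / (4 * L) := by
      rw [Finset.sum_div]
    rw [h2, div_le_iff₀ (by positivity)] at h1
    nlinarith [h1]
  have hT0 : (0:ℝ) < T := by exact_mod_cast hT
  have hJ : f ((T : ℝ)⁻¹ • ∑ t ∈ Finset.range T, x t)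
      ≤ ∑ t ∈ Finset.range T, (T : ℝ)⁻¹ * f (x t) := by
    have := hconv.map_sum_le (t := Finset.range T) (w := fun _ => (T:ℝ)⁻¹)
      (p := fun t => x t) (fun _ _ => by positivity)
      (by simp [Finset.sum_const]; field_simp)
      (fun _ _ => Set.mem_univ _)
    rwa [← Finset.smul_sum] at this
  have hsum' : ∑ t ∈ Finset.range T, (T : ℝ)⁻¹ * f (x t)
      = (T:ℝ)⁻¹ * ∑ t ∈ Finset.range T, (f (x t) - f xstar) + f xstar := by
    have hconst : ∑ _t ∈ Finset.range T, (T:ℝ)⁻¹ * f xstar = f xstar := by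
      rw [Finset.sum_const, Finset.card_range, nsmul_eq_mul]
      field_simp
    calc ∑ t ∈ Finset.range T, (T:ℝ)⁻¹ * f (x t)
        = ∑ t ∈ Finset.range T, ((T:ℝ)⁻¹ * (f (x t) - f xstar) + (T:ℝ)⁻¹ * f xstar) := by
          apply Finset.sum_congr rfl; intro t _; ring
      _ = ∑ t ∈ Finset.range T, (T:ℝ)⁻¹ * (f (x t) - f xstar)
          + ∑ _t ∈ Finset.range T, (T:ℝ)⁻¹ * f xstar := Finset.sum_add_distrib
      _ = _ := by rw [hconst, Finset.mul_sum]
  have hfinal : f ((T : ℝ)⁻¹ • ∑ t ∈ Finset.range T, x t) - f xstar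
      ≤ (T:ℝ)⁻¹ * (4 * L * R 0) := by
    have h1 := hJ.trans_eq hsum'
    have h2 : (T:ℝ)⁻¹ * ∑ t ∈ Finset.range T, (f (x t) - f xstar)
        ≤ (T:ℝ)⁻¹ * (4 * L * R 0) := by
      apply mul_le_mul_of_nonneg_left hsum (by positivity)
    linarith
  calc f ((T : ℝ)⁻¹ • ∑ t ∈ Finset.range T, x t) - f xstar
      ≤ (T:ℝ)⁻¹ * (4 * L * R 0) := hfinal
    _ = 4 * L * ‖x 0 - xstar‖ ^ 2 / T := by rw [hR]; field_simp
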